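/- For positive definite matrices x, y the geometric mean x # y = x^{1/2}(x^{-1/2} y x^{-1/2})^{1/2} x^{1/2} is monotone: if 0 < x₁ ≤ x₂ and 0 < y₁ ≤ y₂ then x₁ # y₁ ≤ x₂ # y₂. -/

import Mathlib

open Matrix
open scoped ComplexOrder Classical

/-- The positive semidefinite square root (junk value `0` if not PSD). -/

noncomputable def msqrt {n : ℕ} (A : Matrix (Fin n) (Fin n) ℂ) :
    Matrix (Fin n) (Fin n) ℂ :=
  if h : A.PosSemidef then h.1.eigenvectorUnitary.1 * diagonal ((↑) ∘ (Real.sqrt ∘ h.1.eigenvalues)) *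
    (star h.1.eigenvectorUnitary : Matrix (Fin n) (Fin n) ℂ) else 0

/-- The matrix geometric mean `x # y = x^{1/2} (x^{-1/2} y x^{-1/2})^{1/2} x^{1/2}`. -/
noncomputable def geoMean {n : ℕ} (x y : Matrix (Fin n) (Fin n) ℂ) :
    Matrix (Fin n) (Fin n) ℂ :=
  msqrt x * msqrt ((msqrt x)⁻¹ * y * (msqrt x)⁻¹) * msqrt x

namespace GeoAux

variable {n : ℕ}

open scoped MatrixOrder in
lemma msqrt_eq_cfcSqrt {A : Matrix (Fin n) (Fin n) ℂ} (h : A.PosSemidef) :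
    msqrt A = CFC.sqrt A := by
  rw [msqrt, dif_pos h, CFC.sqrt_eq_cfc, cfc_nnreal_eq_real _ A, h.1.cfc_eq]
  simp [IsHermitian.cfc, Function.comp_def, max_eq_left (h.eigenvalues_nonneg _)]

/-- Replacement for the removed `Matrix.PosSemidef.sqrt`. -/
noncomputable def _root_.Matrix.PosSemidef.sqrt {A : Matrix (Fin n) (Fin n) ℂ}
    (_h : A.PosSemidef) : Matrix (Fin n) (Fin n) ℂ := msqrt A

open scoped MatrixOrder in
lemma _root_.Matrix.PosSemidef.posSemidef_sqrt {A : Matrix (Fin n) (Fin n) ℂ}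
    (h : A.PosSemidef) : h.sqrt.PosSemidef := by
  rw [Matrix.PosSemidef.sqrt, msqrt_eq_cfcSqrt h]
  exact nonneg_iff_posSemidef.mp (CFC.sqrt_nonneg A)

open scoped MatrixOrder in
lemma _root_.Matrix.PosSemidef.sqrt_mul_self {A : Matrix (Fin n) (Fin n) ℂ}
    (h : A.PosSemidef) : h.sqrt * h.sqrt = A := by
  rw [Matrix.PosSemidef.sqrt, msqrt_eq_cfcSqrt h]
  exact CFC.sqrt_mul_sqrt_self A h.nonneg

open scoped MatrixOrder in
lemma _root_.Matrix.PosSemidef.eq_sqrt_of_sq_eq {A B : Matrix (Fin n) (Fin n) ℂ}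
    (hB : B.PosSemidef) (hA : A.PosSemidef) (hsq : B ^ 2 = A) : B = hA.sqrt := by
  rw [Matrix.PosSemidef.sqrt, msqrt_eq_cfcSqrt hA, eq_comm,
    CFC.sqrt_eq_iff A B hA.nonneg hB.nonneg, ← sq, hsq]


lemma herm_dot {S : Matrix (Fin n) (Fin n) ℂ} (hS : S.IsHermitian) (v w : Fin n → ℂ) :
    star v ⬝ᵥ (S *ᵥ w) = star (S *ᵥ v) ⬝ᵥ w := by
  rw [dotProduct_mulVec, star_mulVec, hS.eq]

lemma posSemidef_of_anticomm {S T : Matrix (Fin n) (Fin n) ℂ} (hS : S.IsHermitian) (hT : T.PosDef)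
    (h : (S * T + T * S).PosSemidef) : S.PosSemidef := by
  refine hS.posSemidef_iff_eigenvalues_nonneg.mpr fun j => ?_
  set v : Fin n → ℂ := ⇑(hS.eigenvectorBasis j) with hv
  have hv0 : v ≠ 0 := by simpa [hv] using hS.eigenvectorBasis.orthonormal.ne_zero j
  set r : ℝ := hS.eigenvalues j with hr
  have hev : S *ᵥ v = (r : ℂ) • v := by
    have := hS.mulVec_eigenvectorBasis j
    ext i
    have h2 := congrFun this i
    simpa [Complex.real_smul] using h2
  set t : ℂ := star v ⬝ᵥ (T *ᵥ v) with ht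
  have htpos : 0 < t := hT.dotProduct_mulVec_pos hv0
  have key : 0 ≤ (r : ℂ) * t + (r : ℂ) * t := by
    have h0 := h.dotProduct_mulVec_nonneg v
    rw [add_mulVec, dotProduct_add, ← mulVec_mulVec, ← mulVec_mulVec,
      herm_dot hS, hev, mulVec_smul, dotProduct_smul, star_smul,
      smul_dotProduct] at h0
    simpa [smul_eq_mul, Complex.star_def, Complex.conj_ofReal] using h0
  have htre : 0 < t.re := by
    rw [Complex.lt_def] at htpos; exact htpos.1
  have htim : t.im = 0 := by
    rw [Complex.lt_def] at htpos; exact htpos.2.symm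
  rw [Complex.le_def] at key
  have : 0 ≤ r * t.re + r * t.re := by
    have := key.1
    simpa [Complex.mul_re, htim] using this
  show (0 : ℝ) ≤ r
  nlinarith


lemma posDef_sqrt {A : Matrix (Fin n) (Fin n) ℂ} (hA : A.PosDef) : hA.posSemidef.sqrt.PosDef := by
  have hS := hA.posSemidef.posSemidef_sqrt
  refine PosDef.of_dotProduct_mulVec_pos hS.1 fun x hx => lt_of_le_of_ne (hS.dotProduct_mulVec_nonneg x) fun heq => ?_
  have hx0 : hA.posSemidef.sqrt *ᵥ x = 0 :=
    (hS.dotProduct_mulVec_zero_iff x).mp heq.symm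
  have hAx : A *ᵥ x = 0 := by
    rw [← hA.posSemidef.sqrt_mul_self, ← mulVec_mulVec, hx0, mulVec_zero]
  have := hA.dotProduct_mulVec_pos hx
  rw [hAx, dotProduct_zero] at this
  exact lt_irrefl 0 this

lemma sqrt_mono {A B : Matrix (Fin n) (Fin n) ℂ} (hA : A.PosSemidef) (hB : B.PosDef)
    (hAB : (B - A).PosSemidef) : (hB.posSemidef.sqrt - hA.sqrt).PosSemidef := by
  set sa := hA.sqrt with hsa'
  set sb := hB.posSemidef.sqrt with hsb'
  have hsa := hA.posSemidef_sqrt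
  have hsb := hB.posSemidef.posSemidef_sqrt
  have hT : (sb + sa).PosDef := (posDef_sqrt hB).add_posSemidef hsa
  refine posSemidef_of_anticomm (hsb.1.sub hsa.1) hT ?_
  have h1 : sa * sa = A := hA.sqrt_mul_self
  have h2 : sb * sb = B := hB.posSemidef.sqrt_mul_self
  have key : (sb - sa) * (sb + sa) + (sb + sa) * (sb - sa) = (B - A) + (B - A) := by
    simp only [sub_mul, mul_sub, add_mul, mul_add, h1, h2]
    abel
  rw [key]
  exact hAB.add hAB

lemma isUnit_conjTranspose {B : Matrix (Fin n) (Fin n) ℂ} (hB : IsUnit B) : IsUnit Bᴴ :=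
  (isUnit_iff_isUnit_det _).2 <| by
    rw [det_conjTranspose]
    exact ((isUnit_iff_isUnit_det _).1 hB).star

lemma posDef_conj {A B : Matrix (Fin n) (Fin n) ℂ} (hA : A.PosDef) (hB : IsUnit B) :
    (B * A * Bᴴ).PosDef := by
  refine PosDef.of_dotProduct_mulVec_pos ?_ fun x hx => ?_
  · show (B * A * Bᴴ)ᴴ = B * A * Bᴴ
    simp [conjTranspose_mul, Matrix.mul_assoc, hA.1.eq]
  · have hBH : IsUnit Bᴴ := isUnit_conjTranspose hB
    have hy : Bᴴ *ᵥ x ≠ 0 :=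
      ((mulVec_injective_iff_isUnit.mpr hBH).ne_iff' (mulVec_zero _)).2 hx
    have heq : star x ⬝ᵥ ((B * A * Bᴴ) *ᵥ x)
        = star (Bᴴ *ᵥ x) ⬝ᵥ (A *ᵥ (Bᴴ *ᵥ x)) := by
      calc star x ⬝ᵥ ((B * A * Bᴴ) *ᵥ x)
          = star x ⬝ᵥ (B *ᵥ ((A * Bᴴ) *ᵥ x)) := by
            rw [mulVec_mulVec, Matrix.mul_assoc]
        _ = (star x ᵥ* B) ⬝ᵥ ((A * Bᴴ) *ᵥ x) := dotProduct_mulVec _ _ _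
        _ = star (Bᴴ *ᵥ x) ⬝ᵥ (A *ᵥ (Bᴴ *ᵥ x)) := by
            rw [star_mulVec, conjTranspose_conjTranspose, mulVec_mulVec]
    rw [heq]
    exact hA.dotProduct_mulVec_pos hy


lemma msqrt_eq {x : Matrix (Fin n) (Fin n) ℂ} (h : x.PosSemidef) : msqrt x = h.sqrt := rfl

variable {x y : Matrix (Fin n) (Fin n) ℂ}

lemma geoMean_eq (hx : x.PosDef)
    (hm : ((hx.posSemidef.sqrt)⁻¹ * y * (hx.posSemidef.sqrt)⁻¹).PosSemidef) :
    geoMean x y = hx.posSemidef.sqrt * hm.sqrt * hx.posSemidef.sqrt := by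
  rw [geoMean, msqrt_eq hx.posSemidef, msqrt_eq hm]

lemma inner_posDef (hx : x.PosDef) (hy : y.PosDef) :
    ((hx.posSemidef.sqrt)⁻¹ * y * (hx.posSemidef.sqrt)⁻¹).PosDef := by
  have hs := posDef_sqrt hx
  have h := posDef_conj hy hs.inv.isUnit
  rwa [hs.inv.1.eq] at h

lemma geoMean_posDef (hx : x.PosDef) (hy : y.PosDef) : (geoMean x y).PosDef := by
  have hm := inner_posDef hx hy
  rw [geoMean_eq hx hm.posSemidef]
  have hs := posDef_sqrt hx
  have h := posDef_conj (posDef_sqrt hm) hs.isUnit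
  rwa [hs.1.eq] at h

lemma geoMean_mul (hx : x.PosDef) (hy : y.PosDef) :
    geoMean x y * x⁻¹ * geoMean x y = y := by
  have hm := inner_posDef hx hy
  have hs := posDef_sqrt hx
  set s := hx.posSemidef.sqrt with hsdef
  set w := hm.posSemidef.sqrt with hwdef
  letI := hs.isUnit.invertible
  have hxinv : x⁻¹ = s⁻¹ * s⁻¹ := by
    rw [← hx.posSemidef.sqrt_mul_self, Matrix.mul_inv_rev]
  have hww : w * w = s⁻¹ * y * s⁻¹ := hm.posSemidef.sqrt_mul_self
  rw [geoMean_eq hx hm.posSemidef, hxinv]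
  calc s * w * s * (s⁻¹ * s⁻¹) * (s * w * s)
      = s * (w * w) * s := by
        simp [Matrix.mul_assoc, Matrix.mul_inv_cancel_left_of_invertible,
          Matrix.inv_mul_cancel_left_of_invertible]
    _ = y := by
        rw [hww]
        simp [Matrix.mul_assoc, Matrix.mul_inv_cancel_left_of_invertible,
          Matrix.inv_mul_cancel_left_of_invertible, Matrix.inv_mul_of_invertible,
          Matrix.mul_inv_of_invertible]

lemma geoMean_unique (hx : x.PosDef) (hy : y.PosDef) {z : Matrix (Fin n) (Fin n) ℂ} (hz : z.PosDef)
    (hzeq : z * x⁻¹ * z = y) : geoMean x y = z := by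
  have hm := inner_posDef hx hy
  have hs := posDef_sqrt hx
  set s := hx.posSemidef.sqrt with hsdef
  letI := hs.isUnit.invertible
  have hxinv : x⁻¹ = s⁻¹ * s⁻¹ := by
    rw [← hx.posSemidef.sqrt_mul_self, Matrix.mul_inv_rev]
  have hu : (s⁻¹ * z * s⁻¹).PosSemidef := by
    have h := hz.posSemidef.mul_mul_conjTranspose_same s⁻¹
    rwa [hs.inv.1.eq] at h
  have hsq : (s⁻¹ * z * s⁻¹) ^ 2 = s⁻¹ * y * s⁻¹ := by
    rw [pow_two, ← hzeq, hxinv]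
    simp [Matrix.mul_assoc]
  have hueq : s⁻¹ * z * s⁻¹ = hm.posSemidef.sqrt :=
    hu.eq_sqrt_of_sq_eq hm.posSemidef hsq
  rw [geoMean_eq hx hm.posSemidef, ← hueq]
  show s * (s⁻¹ * z * s⁻¹) * s = z
  simp [Matrix.mul_assoc, Matrix.mul_inv_cancel_left_of_invertible,
    Matrix.inv_mul_of_invertible]

lemma geoMean_comm (hx : x.PosDef) (hy : y.PosDef) : geoMean x y = geoMean y x := by
  refine geoMean_unique hx hy (geoMean_posDef hy hx) ?_
  have h := geoMean_mul hy hx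
  have hg : (geoMean y x).PosDef := geoMean_posDef hy hx
  set g := geoMean y x with hgdef
  letI := hg.isUnit.invertible
  letI := hy.isUnit.invertible
  have hxinv : x⁻¹ = g⁻¹ * y * g⁻¹ := by
    rw [← h, Matrix.mul_inv_rev, Matrix.mul_inv_rev, Matrix.inv_inv_of_invertible,
      Matrix.mul_assoc]
  rw [hxinv]
  simp [Matrix.mul_assoc, Matrix.mul_inv_cancel_left_of_invertible,
    Matrix.inv_mul_of_invertible]

lemma geoMean_mono_right (hx : x.PosDef) {y₁ y₂ : Matrix (Fin n) (Fin n) ℂ} (hy₁ : y₁.PosDef) (hy₂ : y₂.PosDef)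
    (h : (y₂ - y₁).PosSemidef) : (geoMean x y₂ - geoMean x y₁).PosSemidef := by
  have hm₁ := inner_posDef hx hy₁
  have hm₂ := inner_posDef hx hy₂
  have hs := posDef_sqrt hx
  set s := hx.posSemidef.sqrt with hsdef
  have hdiff : ((s⁻¹ * y₂ * s⁻¹) - (s⁻¹ * y₁ * s⁻¹)).PosSemidef := by
    have hc := h.mul_mul_conjTranspose_same s⁻¹
    rw [hs.inv.1.eq] at hc
    convert hc using 1
    rw [Matrix.mul_sub, Matrix.sub_mul]
  have hd := sqrt_mono hm₁.posSemidef hm₂ hdiff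
  have hc2 := hd.mul_mul_conjTranspose_same s
  rw [hs.1.eq] at hc2
  convert hc2 using 1
  rw [geoMean_eq hx hm₂.posSemidef, geoMean_eq hx hm₁.posSemidef,
    Matrix.mul_sub, Matrix.sub_mul]

end GeoAux

/-- Monotonicity of the geometric mean: if `0 < x₁ ≤ x₂` and `0 < y₁ ≤ y₂`
(Loewner order) then `x₁ # y₁ ≤ x₂ # y₂`. -/
theorem geoMean_mono (n : ℕ) (x₁ x₂ y₁ y₂ : Matrix (Fin n) (Fin n) ℂ)
    (hx₁ : x₁.PosDef) (hx₂ : x₂.PosDef) (hy₁ : y₁.PosDef) (hy₂ : y₂.PosDef)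
    (hx : (x₂ - x₁).PosSemidef) (hy : (y₂ - y₁).PosSemidef) :
    (geoMean x₂ y₂ - geoMean x₁ y₁).PosSemidef := by
  have d2 := GeoAux.geoMean_mono_right hx₁ hy₁ hy₂ hy
  have d1 := GeoAux.geoMean_mono_right hy₂ hx₁ hx₂ hx
  rw [GeoAux.geoMean_comm hy₂ hx₂, GeoAux.geoMean_comm hy₂ hx₁] at d1
  have hsum := d1.add d2
  rwa [sub_add_sub_cancel] at hsum
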